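/- Let n ≥ 2 and let M = (g_{αβ̄}) be an n×n matrix over ℂ depending on a small parameter ψ < 0 such that ψ²·g_{αβ̄} → L_{αβ̄} and, for (α,β) with α ≤ n−1, ψ·g_{αβ̄} → h_{αβ̄} as ψ → 0⁻, where L_{αβ̄} = (2n−2)v_α v̄_β with v = (0,…,0,1) and h_{αβ̄} are fixed complex numbers with h_{αβ̄} = −(2n−2)ψ_{αβ̄}(0) for α,β ≤ n−1, the matrix (ψ_{αβ̄}(0))_{α,β≤n−1} being invertible. Then ψ^{n+1}·det M converges to (−1)^{n−1}(2n−2)^n det(ψ_{αβ̄}(0))_{1≤α,β≤n−1} ≠ 0, and ψ^{−2}·(M^{−1})_{nn̄} converges to 1/(2n−2). -/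

import Mathlib

open Filter Topology

lemma adj_last_aux {m : ℕ} (A : Matrix (Fin (m+2)) (Fin (m+2)) ℂ) :
    A.adjugate (Fin.last (m+1)) (Fin.last (m+1))
      = (A.submatrix Fin.castSucc Fin.castSucc).det := by
  rw [Matrix.adjugate_apply, Matrix.det_succ_row _ (Fin.last (m+1)),
    Finset.sum_eq_single (Fin.last (m+1))]
  · have hsub : (A.updateRow (Fin.last (m+1)) (Pi.single (Fin.last (m+1)) 1)).submatrix
        (Fin.last (m+1)).succAbove (Fin.last (m+1)).succAbove
        = A.submatrix Fin.castSucc Fin.castSucc := by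
      ext α β
      simp [Fin.succAbove_last, Matrix.updateRow_ne (Fin.castSucc_lt_last α).ne]
    rw [hsub]
    simp only [Matrix.updateRow_self, Pi.single_eq_same, Fin.val_last, mul_one]
    rw [Even.neg_one_pow ⟨m+1, rfl⟩, one_mul]
  · intro j _ hj
    simp [Matrix.updateRow_self, Pi.single_eq_of_ne hj]
  · simp

/-- Abstract matrix-limit statement (Corollaries 2.7 and 2.8 of the paper):
for a family `M ψ` of invertible Hermitian matrices (`ψ < 0`, `ψ → 0⁻`) with
`ψ² M → (2n-2) v v*` (`v = e_n`) and `ψ M_{αβ} → Q_{αβ}` for `α ≤ n-1`, where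
`Q_{αβ} = -(2n-2) ψ_{αβ̄}(0)` for `α,β ≤ n-1` and `(ψ_{αβ̄}(0))_{α,β ≤ n-1}`
is invertible, one has
`ψ^{n+1} det M → (-1)^{n-1} (2n-2)^n det(ψ_{αβ̄}(0)) ≠ 0` and
`ψ^{-2} (M⁻¹)_{nn̄} → 1/(2n-2)`. -/
theorem stmt_18 (n : ℕ) (hn : 2 ≤ n)
    (M : ℝ → Matrix (Fin n) (Fin n) ℂ)
    (hHerm : ∀ t < (0 : ℝ), (M t).IsHermitian)
    (hUnit : ∀ t < (0 : ℝ), IsUnit (M t).det)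
    (last : Fin n) (hlast : last = ⟨n - 1, by omega⟩)
    (hM2 : Tendsto (fun t : ℝ => ((t : ℂ) ^ 2) • M t) (nhdsWithin 0 (Set.Iio 0))
      (nhds (fun α β => if α = last ∧ β = last then (2 * (n : ℂ) - 2) else 0)))
    (Q : Matrix (Fin n) (Fin n) ℂ)
    (hM1 : ∀ α β : Fin n, (α : ℕ) < n - 1 →
      Tendsto (fun t : ℝ => (t : ℂ) * M t α β) (nhdsWithin 0 (Set.Iio 0))
        (nhds (Q α β)))
    (P : Matrix (Fin (n - 1)) (Fin (n - 1)) ℂ) (hP : P.det ≠ 0)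
    (hQ : ∀ α β : Fin n, (hα : (α : ℕ) < n - 1) → (hβ : (β : ℕ) < n - 1) →
      Q α β = -(2 * (n : ℂ) - 2) * P ⟨α, hα⟩ ⟨β, hβ⟩) :
    Tendsto (fun t : ℝ => (t : ℂ) ^ (n + 1) * (M t).det)
        (nhdsWithin 0 (Set.Iio 0))
        (nhds ((-1) ^ (n - 1) * (2 * (n : ℂ) - 2) ^ n * P.det))
      ∧ (-1 : ℂ) ^ (n - 1) * (2 * (n : ℂ) - 2) ^ n * P.det ≠ 0
      ∧ Tendsto (fun t : ℝ => ((t : ℂ) ^ 2)⁻¹ * (M t)⁻¹ last last)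
          (nhdsWithin 0 (Set.Iio 0)) (nhds (1 / (2 * (n : ℂ) - 2))) := by
  obtain ⟨m, rfl⟩ : ∃ m, n = m + 2 := ⟨n - 2, by omega⟩
  have hl : last = Fin.last (m + 1) := by rw [hlast]; rfl
  subst hl
  clear hlast hn hHerm
  set l : Filter ℝ := nhdsWithin (0 : ℝ) (Set.Iio 0) with hldef
  set c : ℂ := 2 * ((m + 2 : ℕ) : ℂ) - 2 with hc
  have hc0 : c ≠ 0 := by
    have : c = ((2 * m + 2 : ℕ) : ℂ) := by rw [hc]; push_cast; ring
    rw [this]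
    exact Nat.cast_ne_zero.mpr (by omega)
  clear_value c
  clear hc
  -- the (m+1)×(m+1) limit block
  have hQsP : ∀ α β : Fin (m + 1), Q α.castSucc β.castSucc = -c * P α β := by
    intro α β
    have hα : ((α.castSucc : Fin (m + 2)) : ℕ) < m + 2 - 1 := α.isLt
    have hβ : ((β.castSucc : Fin (m + 2)) : ℕ) < m + 2 - 1 := β.isLt
    rw [hQ _ _ hα hβ]
    congr 1 <;> exact Fin.ext rfl
  set Qs : Matrix (Fin (m + 1)) (Fin (m + 1)) ℂ :=
    fun α β => Q α.castSucc β.castSucc with hQs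
  have hQsdet : Qs.det = (-c) ^ (m + 1) * P.det := by
    have hQsm : Qs = (-c) • P := by
      ext α β
      simp only [hQs, Matrix.smul_apply, smul_eq_mul]
      exact hQsP α β
    rw [hQsm, Matrix.det_smul, Fintype.card_fin]
  -- the limit of the minor
  have hnum : Tendsto (fun t : ℝ =>
      (t : ℂ) • ((M t).submatrix Fin.castSucc Fin.castSucc)) l (nhds Qs) := by
    refine tendsto_pi_nhds.mpr fun α => tendsto_pi_nhds.mpr fun β => ?_
    have := hM1 α.castSucc β.castSucc α.isLt
    simpa [Matrix.smul_apply] using this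
  have hdetnum : Tendsto (fun t : ℝ =>
      (t : ℂ) ^ (m + 1) * ((M t).submatrix Fin.castSucc Fin.castSucc).det) l
      (nhds ((-c) ^ (m + 1) * P.det)) := by
    have h := (continuous_id.matrix_det.tendsto Qs).comp hnum
    simp only [Function.comp_def, id_eq, Matrix.det_smul, Fintype.card_fin,
      smul_eq_mul] at h
    rw [hQsdet] at h
    exact h
  -- the full limit matrix B
  set B : Matrix (Fin (m + 2)) (Fin (m + 2)) ℂ :=
    fun α β => if α = Fin.last (m + 1) then (if β = Fin.last (m + 1) then c else 0)
      else Q α β with hB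
  have hBsub : B.submatrix (Fin.last (m + 1)).succAbove (Fin.last (m + 1)).succAbove
      = (-c) • P := by
    ext α β
    simp only [Matrix.submatrix_apply, Fin.succAbove_last, hB,
      if_neg (Fin.castSucc_lt_last α).ne, Matrix.smul_apply, smul_eq_mul]
    change (if α.castSucc = Fin.last (m + 1) then (if β.castSucc = Fin.last (m + 1) then c else 0)
      else Q α.castSucc β.castSucc) = _
    rw [if_neg (Fin.castSucc_lt_last α).ne]
    exact hQsP α β
  have hdetB : B.det = (-1 : ℂ) ^ (m + 1) * c ^ (m + 2) * P.det := by
    rw [Matrix.det_succ_row B (Fin.last (m + 1)),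
      Finset.sum_eq_single (Fin.last (m + 1))]
    · rw [hBsub, Matrix.det_smul, Fintype.card_fin]
      have hBll : B (Fin.last (m + 1)) (Fin.last (m + 1)) = c := by simp [hB]
      rw [hBll]
      simp only [Fin.val_last]
      rw [Even.neg_one_pow ⟨m + 1, rfl⟩, one_mul, neg_pow]
      ring_nf
    · intro j _ hj
      have : B (Fin.last (m + 1)) j = 0 := by simp [hB, hj]
      rw [this]; ring
    · simp
  -- convergence of the row-rescaled matrix to B
  set F : ℝ → Matrix (Fin (m + 2)) (Fin (m + 2)) ℂ := fun t =>
    Matrix.of fun α β =>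
      (if α = Fin.last (m + 1) then (t : ℂ) ^ 2 else (t : ℂ)) * M t α β with hF
  have hFtend : Tendsto F l (nhds B) := by
    refine tendsto_pi_nhds.mpr fun α => tendsto_pi_nhds.mpr fun β => ?_
    by_cases hα : α = Fin.last (m + 1)
    · subst hα
      have h2 := ((continuous_id.matrix_elem (Fin.last (m + 1)) β).tendsto _).comp hM2
      simp only [Function.comp_def, id_eq, Matrix.smul_apply, smul_eq_mul,
        true_and] at h2
      simpa [hF, hB, id] using h2
    · have hαlt : (α : ℕ) < m + 2 - 1 := by
        have h1 := α.isLt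
        have h2 : (α : ℕ) ≠ m + 1 := fun h => hα (Fin.ext (by simpa using h))
        omega
      have := hM1 α β hαlt
      simpa [hF, hB, if_neg hα] using this
  have hdetF : ∀ t : ℝ, (F t).det = (t : ℂ) ^ (m + 2 + 1) * (M t).det := by
    intro t
    rw [hF, Matrix.det_mul_column]
    congr 1
    rw [Fin.prod_univ_castSucc, if_pos rfl,
      Finset.prod_congr rfl (fun i _ => if_neg (Fin.castSucc_lt_last i).ne),
      Finset.prod_const, Finset.card_univ, Fintype.card_fin]
    ring
  have hpart1 : Tendsto (fun t : ℝ => (t : ℂ) ^ (m + 2 + 1) * (M t).det) l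
      (nhds ((-1 : ℂ) ^ (m + 1) * c ^ (m + 2) * P.det)) := by
    have h := (continuous_id.matrix_det.tendsto B).comp hFtend
    simp only [Function.comp_def, id_eq] at h
    rw [hdetB] at h
    exact h.congr fun t => hdetF t
  have hne : (-1 : ℂ) ^ (m + 1) * c ^ (m + 2) * P.det ≠ 0 :=
    mul_ne_zero (mul_ne_zero (pow_ne_zero _ (neg_ne_zero.mpr one_ne_zero))
      (pow_ne_zero _ hc0)) hP
  refine ⟨hpart1, hne, ?_⟩
  -- third part
  have hdiv : Tendsto (fun t : ℝ =>
      ((t : ℂ) ^ (m + 1) * ((M t).submatrix Fin.castSucc Fin.castSucc).det)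
        / ((t : ℂ) ^ (m + 2 + 1) * (M t).det)) l
      (nhds (((-c) ^ (m + 1) * P.det) / ((-1 : ℂ) ^ (m + 1) * c ^ (m + 2) * P.det))) :=
    hdetnum.div hpart1 hne
  have hlim : ((-c) ^ (m + 1) * P.det) / ((-1 : ℂ) ^ (m + 1) * c ^ (m + 2) * P.det)
      = 1 / c := by
    rw [div_eq_div_iff hne hc0, neg_pow, one_mul]
    ring
  rw [hlim] at hdiv
  refine Tendsto.congr' ?_ hdiv
  filter_upwards [self_mem_nhdsWithin] with t ht
  have ht0 : (t : ℂ) ≠ 0 := Complex.ofReal_ne_zero.mpr (ne_of_lt ht)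
  have hdet0 : (M t).det ≠ 0 := (hUnit t ht).ne_zero
  rw [Matrix.inv_def, Matrix.smul_apply, Ring.inverse_eq_inv, adj_last_aux,
    smul_eq_mul]
  field_simp
  ring
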